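/- arXiv:2301.05482 — 2 statements merged into one kernel-verified Lean document; each statement's English description precedes it below -/
import Mathlib

section
/- Let G : ℝ² → Set ℝ² be defined by G(x₁,x₂) = {(2,2)} if x₂ ≠ 0 and G(x₁,x₂) = {(s,s) : 1 ≤ s ≤ 2} if x₂ = 0, and fix η ∈ (0,1). Define M : [0,1]×[0,1] → Set ℝ₊² by M(p₁,p₂) = [0,η]×[0,∞) if 0 ≤ p₁ ≤ η and M(p₁,p₂) = [0,p₁]×[0,∞) if η < p₁ ≤ 1. Then the coercivity condition C(p) holds at every p ∈ [0,1]×[0,1] with r_p = 1: for every y ∈ M(p) with ‖y‖ > 1 there exists z ∈ M(p) with ‖z‖ < ‖y‖ and ⟨y*, y - z⟩ ≥ 0 for all y* ∈ G(y). -/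
open RealInnerProductSpace

noncomputable def G5 : EuclideanSpace ℝ (Fin 2) → Set (EuclideanSpace ℝ (Fin 2)) := fun x =>
  if x 1 ≠ 0 then {WithLp.toLp 2 (fun _ => (2 : ℝ))}
  else {y | ∃ s : ℝ, 1 ≤ s ∧ s ≤ 2 ∧ y = WithLp.toLp 2 (fun _ => s)}

noncomputable def M5 (η : ℝ) : EuclideanSpace ℝ (Fin 2) → Set (EuclideanSpace ℝ (Fin 2)) := fun p =>
  if p 0 ≤ η then {y | 0 ≤ y 0 ∧ y 0 ≤ η ∧ 0 ≤ y 1}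
  else {y | 0 ≤ y 0 ∧ y 0 ≤ p 0 ∧ 0 ≤ y 1}

/-- For the maps `G` and `M` of Example 2.1, the coercivity condition `C(p)` holds at every
`p ∈ [0,1] × [0,1]` with `r_p = 1`. -/
theorem stmt_5 (η : ℝ) (hη : η ∈ Set.Ioo (0 : ℝ) 1)
    (p : EuclideanSpace ℝ (Fin 2)) (hp : p 0 ∈ Set.Icc (0 : ℝ) 1 ∧ p 1 ∈ Set.Icc (0 : ℝ) 1) :
    ∀ y ∈ M5 η p, ‖y‖ > 1 →
      ∃ z ∈ M5 η p, ‖z‖ < ‖y‖ ∧ ∀ ys ∈ G5 y, ⟪ys, y - z⟫ ≥ 0 := by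
  intro y hy hny
  refine ⟨0, ?_, ?_, ?_⟩
  · unfold M5 at *
    split_ifs with h
    · exact ⟨le_refl _, by simpa using hη.1.le, le_refl _⟩
    · exact ⟨le_refl _, by simpa using (lt_trans hη.1 (lt_of_not_ge h)).le, le_refl _⟩
  · simpa using lt_trans one_pos hny
  · intro ys hys
    have hy0 : 0 ≤ y 0 ∧ 0 ≤ y 1 := by
      unfold M5 at hy; split_ifs at hy <;> exact ⟨hy.1, hy.2.2⟩
    have hys' : ∃ s : ℝ, 1 ≤ s ∧ ys = WithLp.toLp 2 (fun _ => s) := by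
      unfold G5 at hys
      split_ifs at hys with h
      · exact ⟨2, by norm_num, hys⟩
      · obtain ⟨s, h1, _, h3⟩ := hys; exact ⟨s, h1, h3⟩
    obtain ⟨s, hs1, rfl⟩ := hys'
    rw [sub_zero]
    rw [EuclideanSpace.inner_eq_star_dotProduct]
    simp [dotProduct, Fin.sum_univ_two]
    have : (0:ℝ) ≤ s := le_trans zero_le_one hs1
    nlinarith [hy0.1, hy0.2]
end

section
/- In the two-agent, two-good exchange economy with X₁ = {(x¹,x²) ∈ ℝ² : x² ≥ 0}, X₂ = ℝ²₊, endowments e₁ = e₂ = (1,1), and utilities u₁(x¹,x²) = x² and u₂(x¹,x²) = x¹ + x², there is no Walrasian equilibrium: there is no price p ∈ ℝ² \ {0} and allocation (x̄₁, x̄₂) with x̄ᵢ maximizing uᵢ over the budget set {xᵢ ∈ Xᵢ : ⟨p, xᵢ⟩ ≤ ⟨p, eᵢ⟩} for each i and x̄₁ + x̄₂ = e₁ + e₂. -/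
open RealInnerProductSpace

/-- In the economy with `X₁ = {x : x² ≥ 0}`, `X₂ = ℝ²₊`, `e₁ = e₂ = (1,1)`,
`u₁(x) = x²`, `u₂(x) = x¹ + x²`, there is no Walrasian equilibrium. -/
theorem stmt_12
    (X₁ : Set (EuclideanSpace ℝ (Fin 2))) (hX₁ : X₁ = {x | 0 ≤ x 1})
    (X₂ : Set (EuclideanSpace ℝ (Fin 2))) (hX₂ : X₂ = {x | 0 ≤ x 0 ∧ 0 ≤ x 1})
    (e : EuclideanSpace ℝ (Fin 2)) (he : e = WithLp.toLp 2 (fun _ => (1 : ℝ)))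
    (u₁ u₂ : EuclideanSpace ℝ (Fin 2) → ℝ)
    (hu₁ : ∀ x, u₁ x = x 1) (hu₂ : ∀ x, u₂ x = x 0 + x 1) :
    ¬ ∃ (p : EuclideanSpace ℝ (Fin 2)) (x₁ x₂ : EuclideanSpace ℝ (Fin 2)),
        p ≠ 0 ∧
        (x₁ ∈ X₁ ∧ ⟪p, x₁⟫ ≤ ⟪p, e⟫) ∧
        (x₂ ∈ X₂ ∧ ⟪p, x₂⟫ ≤ ⟪p, e⟫) ∧
        (∀ y ∈ X₁, ⟪p, y⟫ ≤ ⟪p, e⟫ → u₁ y ≤ u₁ x₁) ∧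
        (∀ y ∈ X₂, ⟪p, y⟫ ≤ ⟪p, e⟫ → u₂ y ≤ u₂ x₂) ∧
        x₁ + x₂ = e + e := by
  rintro ⟨p, x₁, x₂, -, ⟨h₁X, -⟩, ⟨h₂X, hbud₂⟩, hmax₁, hmax₂, -⟩
  subst hX₁ hX₂
  have hpe : ⟪p, e⟫ = p 0 + p 1 := by
    subst he
    simp [PiLp.inner_apply, Fin.sum_univ_two]
  rcases le_or_gt (p 0) 0 with hp0 | hp0
  · -- agent 2 can add one unit of good 1
    set y : EuclideanSpace ℝ (Fin 2) := x₂ + EuclideanSpace.single 0 1 with hy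
    have hyX : y ∈ {x : EuclideanSpace ℝ (Fin 2) | 0 ≤ x 0 ∧ 0 ≤ x 1} := by
      obtain ⟨ha, hb⟩ := h₂X
      constructor <;> simp [hy, EuclideanSpace.single_apply] <;> positivity
    have hbud : ⟪p, y⟫ ≤ ⟪p, e⟫ := by
      have h : ⟪p, y⟫ = ⟪p, x₂⟫ + p 0 := by
        simp [hy, inner_add_right, EuclideanSpace.inner_single_right]
      rw [h]; linarith
    have := hmax₂ y hyX hbud
    rw [hu₂, hu₂] at this
    simp [hy, EuclideanSpace.single_apply] at this
    linarith
  · -- agent 1 has unbounded income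
    set t : ℝ := (p 0 + p 1 - p 1 * (x₁ 1 + 1)) / p 0 with ht
    set y : EuclideanSpace ℝ (Fin 2) := WithLp.toLp 2 ![t, x₁ 1 + 1] with hy
    have h₁ : x₁ 1 ≥ 0 := h₁X
    have hyX : y ∈ {x : EuclideanSpace ℝ (Fin 2) | 0 ≤ x 1} := by
      show (0:ℝ) ≤ y 1
      simp [hy]; linarith
    have hbud : ⟪p, y⟫ ≤ ⟪p, e⟫ := by
      have h : ⟪p, y⟫ = p 0 * t + p 1 * (x₁ 1 + 1) := by
        simp [hy, PiLp.inner_apply, Fin.sum_univ_two]; ring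
      rw [h, hpe, ht]
      field_simp
      linarith
    have := hmax₁ y hyX hbud
    rw [hu₁, hu₁] at this
    simp [hy] at this
    linarith
end
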